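/- arXiv:2411.07120 — 3 statements merged into one kernel-verified Lean document; each statement's English description precedes it below -/
import Mathlib

section
/- Let β ∈ [0,1), let g_1,…,g_T be vectors in ℝ^k, and define the exponential-moving-average momentum sequence m_0 = 0 and m_t = β·m_{t−1} + (1−β)·g_t for t = 1,…,T. Then Σ_{t=1}^T ‖m_t‖² ≤ Σ_{t=1}^T ‖g_t‖². -/
set_option autoImplicit false

/-- For `β ∈ [0,1)` and the EMA momentum sequence `m₀ = 0`,
`m_t = β·m_{t−1} + (1−β)·g_t`, we have `Σ_{t=1}^T ‖m_t‖² ≤ Σ_{t=1}^T ‖g_t‖²`. -/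
theorem sum_sq_norm_momentum_le {k : ℕ} (β : ℝ) (hβ0 : 0 ≤ β) (hβ1 : β < 1)
    (T : ℕ) (g m : ℕ → EuclideanSpace ℝ (Fin k))
    (hm0 : m 0 = 0)
    (hm : ∀ t, 1 ≤ t → t ≤ T → m t = β • m (t - 1) + (1 - β) • g t) :
    ∑ t ∈ Finset.Icc 1 T, ‖m t‖ ^ 2 ≤ ∑ t ∈ Finset.Icc 1 T, ‖g t‖ ^ 2 := by
  set A := ∑ t ∈ Finset.Icc 1 T, ‖m t‖ ^ 2 with hA
  set B := ∑ t ∈ Finset.Icc 1 T, ‖g t‖ ^ 2 with hB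
  set C := ∑ t ∈ Finset.Icc 1 T, ‖m (t - 1)‖ ^ 2 with hC
  have step1 : A ≤ β * C + (1 - β) * B := by
    have h1 : A ≤ ∑ t ∈ Finset.Icc 1 T,
        (β * ‖m (t - 1)‖ ^ 2 + (1 - β) * ‖g t‖ ^ 2) := by
      apply Finset.sum_le_sum
      intro t ht
      rw [Finset.mem_Icc] at ht
      rw [hm t ht.1 ht.2]
      have hn : ‖β • m (t - 1) + (1 - β) • g t‖ ≤
          β * ‖m (t - 1)‖ + (1 - β) * ‖g t‖ := by
        calc ‖β • m (t - 1) + (1 - β) • g t‖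
            ≤ ‖β • m (t - 1)‖ + ‖(1 - β) • g t‖ := norm_add_le _ _
          _ = β * ‖m (t - 1)‖ + (1 - β) * ‖g t‖ := by
              rw [norm_smul, norm_smul, Real.norm_eq_abs, Real.norm_eq_abs,
                abs_of_nonneg hβ0, abs_of_nonneg (by linarith)]
      have hnn : (0:ℝ) ≤ ‖β • m (t - 1) + (1 - β) • g t‖ := norm_nonneg _
      have hsq := pow_le_pow_left₀ hnn hn 2
      nlinarith [mul_nonneg (mul_nonneg hβ0 (by linarith : (0:ℝ) ≤ 1 - β))
        (sq_nonneg (‖m (t - 1)‖ - ‖g t‖))]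
    calc A ≤ _ := h1
      _ = β * C + (1 - β) * B := by
          rw [Finset.sum_add_distrib, ← Finset.mul_sum, ← Finset.mul_sum]
  have step2 : C ≤ A := by
    have hre : C = ∑ i ∈ Finset.range T, ‖m i‖ ^ 2 := by
      rw [hC, show Finset.Icc 1 T = Finset.Ico 1 (T + 1) by
        rw [Finset.Ico_add_one_right_eq_Icc], Finset.sum_Ico_eq_sum_range]
      simp
    rw [hre]
    rcases Nat.eq_zero_or_pos T with h0 | h0
    · simp [h0, hA]
    · rw [Finset.range_eq_Ico]
      have : ∑ i ∈ Finset.Ico 0 T, ‖m i‖ ^ 2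
          = ‖m 0‖ ^ 2 + ∑ i ∈ Finset.Ico 1 T, ‖m i‖ ^ 2 := by
        rw [Finset.sum_eq_sum_Ico_succ_bot h0]
      rw [this, hm0]
      simp only [norm_zero, ne_eq, OfNat.ofNat_ne_zero, not_false_eq_true,
        zero_pow, zero_add]
      apply Finset.sum_le_sum_of_subset_of_nonneg
      · intro x hx
        rw [Finset.mem_Ico] at hx
        rw [Finset.mem_Icc]
        omega
      · intro i _ _
        positivity
  have h1β : 0 < 1 - β := by linarith
  nlinarith
end

section
/- Let b_0 > 0 and let a_1,…,a_T be nonnegative reals. Define b_t := √(b_{t−1}² + a_t) for t = 1,…,T. Then Σ_{t=1}^T a_t/b_t² ≤ 2·log(b_T/b_0). -/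
set_option autoImplicit false

/-- For `b₀ > 0`, nonnegative reals `a_1,…,a_T`, and
`b_t = √(b_{t−1}² + a_t)`, we have `Σ_{t=1}^T a_t/b_t² ≤ 2·log(b_T/b₀)`. -/
theorem sum_div_sq_le_two_log (T : ℕ) (a b : ℕ → ℝ)
    (hb0 : 0 < b 0) (ha : ∀ t, 1 ≤ t → t ≤ T → 0 ≤ a t)
    (hrec : ∀ t, 1 ≤ t → t ≤ T → b t = Real.sqrt ((b (t - 1)) ^ 2 + a t)) :
    ∑ t ∈ Finset.Icc 1 T, a t / (b t) ^ 2 ≤ 2 * Real.log (b T / b 0) := by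
  -- positivity of all b t for t ≤ T
  have hpos : ∀ t, t ≤ T → 0 < b t := by
    intro t
    induction t with
    | zero => intro _; exact hb0
    | succ n ih =>
      intro h
      have hn : 0 < b n := ih (le_of_lt (Nat.lt_of_succ_le h))
      rw [hrec (n + 1) (Nat.le_add_left 1 n) h]
      have : (0:ℝ) < (b ((n+1) - 1)) ^ 2 + a (n+1) := by
        have := ha (n+1) (Nat.le_add_left 1 n) h
        simp only [Nat.add_sub_cancel]
        positivity
      exact Real.sqrt_pos.mpr this
  -- squares relation
  have hsq : ∀ t, 1 ≤ t → t ≤ T → (b t) ^ 2 = (b (t-1)) ^ 2 + a t := by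
    intro t h1 h2
    rw [hrec t h1 h2, Real.sq_sqrt]
    have h0 : 0 < b (t-1) := hpos (t-1) (le_trans (Nat.sub_le t 1) h2)
    have := ha t h1 h2
    positivity
  -- key per-step bound
  have key : ∀ t, 1 ≤ t → t ≤ T →
      a t / (b t) ^ 2 ≤ Real.log ((b t) ^ 2) - Real.log ((b (t-1)) ^ 2) := by
    intro t h1 h2
    have hbt : 0 < b t := hpos t h2
    have hbt1 : 0 < b (t-1) := hpos (t-1) (le_trans (Nat.sub_le t 1) h2)
    have hx : (0:ℝ) < (b (t-1))^2 / (b t)^2 := by positivity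
    have hlog := Real.log_le_sub_one_of_pos hx
    rw [Real.log_div (by positivity) (by positivity)] at hlog
    have hbt2 : (0:ℝ) < (b t)^2 := by positivity
    have ha' : a t = (b t)^2 - (b (t-1))^2 := by rw [hsq t h1 h2]; ring
    rw [ha']
    have hdiv : ((b t)^2 - (b (t-1))^2) / (b t)^2 = 1 - (b (t-1))^2 / (b t)^2 := by
      field_simp
    rw [hdiv]
    linarith
  -- telescoping sum
  have main : ∀ n, n ≤ T → ∑ t ∈ Finset.Icc 1 n, a t / (b t) ^ 2 ≤
      Real.log ((b n) ^ 2) - Real.log ((b 0) ^ 2) := by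
    intro n
    induction n with
    | zero => intro _; simp
    | succ m ih =>
      intro h
      rw [Finset.sum_Icc_succ_top (Nat.le_add_left 1 m)]
      have h1 := ih (le_of_lt (Nat.lt_of_succ_le h))
      have h2 := key (m+1) (Nat.le_add_left 1 m) h
      simp only [Nat.add_sub_cancel] at h2
      linarith
  have := main T le_rfl
  have hbT : 0 < b T := hpos T le_rfl
  rw [Real.log_div (ne_of_gt hbT) (ne_of_gt hb0)]
  rw [Real.log_pow, Real.log_pow] at this
  push_cast at this
  linarith
end

section
/- Let f : ℝ^d → ℝ be L-smooth and lower bounded by f_*, and run SGD with the Subset-Norm step size with step size η > 0. Write ξ_{t,Ψ_i} := ĝ_{t,Ψ_i} − ∇f(x_t)_{Ψ_i}, Δ₁ := f(x₁) − f_*, and b_{0,min} := min_i b_{0,i}. Then deterministically, Σ_{t=1}^T Σ_{i=0}^{c−1} ‖ĝ_{t,Ψ_i}‖²/b_{t,i} ≤ 4Δ₁/η + 2·Σ_{t=1}^T Σ_{i=0}^{c−1} ‖ξ_{t,Ψ_i}‖²/b_{t,i} + 8ηLc·max(0, log(4ηL/b_{0,min})). -/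
set_option autoImplicit false
set_option maxHeartbeats 1000000

open RealInnerProductSpace in
theorem descent_aux19 {E : Type*} [NormedAddCommGroup E] [InnerProductSpace ℝ E]
    [CompleteSpace E]
    (f : E → ℝ) (g : E → E) (hg : ∀ y, HasGradientAt f (g y) y)
    (L : ℝ) (hL : ∀ y z, ‖g y - g z‖ ≤ L * ‖y - z‖) (x y : E) :
    f y ≤ f x + ⟪g x, y - x⟫ + L / 2 * ‖y - x‖ ^ 2 := by
  set v := y - x with hv
  have hline : ∀ s : ℝ, HasDerivAt (fun s : ℝ => x + s • v) v s := by
    intro s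
    simpa using ((hasDerivAt_id s).smul_const v).const_add x
  have hφ : ∀ s : ℝ, HasDerivAt (fun s : ℝ => f (x + s • v)) ⟪g (x + s • v), v⟫ s := by
    intro s
    have h1 := (hg (x + s • v)).hasFDerivAt.comp_hasDerivAt s (hline s)
    simp [InnerProductSpace.toDual_apply_apply] at h1
    exact h1
  set q : ℝ → ℝ := fun s => f x + s * ⟪g x, v⟫ + L / 2 * (s ^ 2 * ‖v‖ ^ 2) - f (x + s • v)
    with hqdef
  have hq' : ∀ s : ℝ, HasDerivAt q (⟪g x, v⟫ + L * s * ‖v‖ ^ 2 - ⟪g (x + s • v), v⟫) s := by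
    intro s
    have h1 : HasDerivAt (fun s : ℝ => f x + s * ⟪g x, v⟫ + L / 2 * (s ^ 2 * ‖v‖ ^ 2))
        (⟪g x, v⟫ + L * s * ‖v‖ ^ 2) s := by
      have h2 := ((hasDerivAt_id s).mul_const ⟪g x, v⟫).const_add (f x)
      have h3 := (((hasDerivAt_pow 2 s).mul_const (‖v‖ ^ 2)).const_mul (L / 2))
      exact (h2.add h3).congr_deriv (by push_cast; ring)
    exact h1.sub (hφ s)
  have hmono : MonotoneOn q (Set.Icc 0 1) := by
    apply monotoneOn_of_deriv_nonneg (convex_Icc 0 1)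
    · exact fun s _ => (hq' s).differentiableAt.continuousAt.continuousWithinAt
    · exact fun s _ => (hq' s).differentiableAt.differentiableWithinAt
    · intro s hs
      rw [interior_Icc] at hs
      rw [(hq' s).deriv]
      have h4 : ⟪g (x + s • v) - g x, v⟫ ≤ L * s * ‖v‖ ^ 2 := by
        calc ⟪g (x + s • v) - g x, v⟫ ≤ ‖g (x + s • v) - g x‖ * ‖v‖ := real_inner_le_norm _ _
        _ ≤ (L * ‖(x + s • v) - x‖) * ‖v‖ :=
            mul_le_mul_of_nonneg_right (hL _ _) (norm_nonneg v)
        _ = L * s * ‖v‖ ^ 2 := by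
            rw [add_sub_cancel_left, norm_smul, Real.norm_eq_abs, abs_of_pos hs.1]
            ring
      rw [inner_sub_left] at h4
      linarith
  have h1 : q 0 ≤ q 1 :=
    hmono (Set.mem_Icc.2 ⟨le_refl 0, zero_le_one⟩)
      (Set.mem_Icc.2 ⟨zero_le_one, le_refl 1⟩) zero_le_one
  have h0 : q 0 = 0 := by simp [hqdef]
  have hxy : x + (1 : ℝ) • v = y := by simp [hv]
  rw [h0, hqdef] at h1
  simp only [hxy, one_pow, one_mul] at h1
  linarith



/-- Deterministic bound for SGD with Subset-Norm step size: if `f` is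
`L`-smooth and lower bounded by `f_*`, then
`Σ_{t=1}^T Σ_i ‖ĝ_{t,Ψ_i}‖²/b_{t,i} ≤ 4Δ₁/η + 2·Σ_{t=1}^T Σ_i ‖ξ_{t,Ψ_i}‖²/b_{t,i}
  + 8ηLc·max(0, log(4ηL/b_{0,min}))`. -/
theorem subset_norm_grad_sum_bound {d c : ℕ}
    (ψ : Fin d → Fin c) (hψ : Function.Surjective ψ)
    (L fstar : ℝ) (f : EuclideanSpace ℝ (Fin d) → ℝ)
    (gradf : EuclideanSpace ℝ (Fin d) → EuclideanSpace ℝ (Fin d))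
    (hgrad : ∀ y, HasGradientAt f (gradf y) y)
    (hsmooth : ∀ y z, ‖gradf y - gradf z‖ ≤ L * ‖y - z‖)
    (hlb : ∀ y, fstar ≤ f y)
    (η : ℝ) (hη : 0 < η)
    (ghat : ℕ → EuclideanSpace ℝ (Fin d))
    (b : ℕ → Fin c → ℝ) (hb0 : ∀ i, 0 < b 0 i)
    (hbrec : ∀ t, 1 ≤ t → ∀ i, b t i =
      Real.sqrt ((b (t - 1) i) ^ 2 + ∑ j ∈ Finset.univ.filter (fun j => ψ j = i), (ghat t j) ^ 2))
    (x : ℕ → EuclideanSpace ℝ (Fin d))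
    (hxrec : ∀ t, 1 ≤ t → ∀ j, x (t + 1) j = x t j - (η / b t (ψ j)) * ghat t j)
    (Δ₁ b0min : ℝ) (hΔ₁ : Δ₁ = f (x 1) - fstar)
    (hb0min_le : ∀ i, b0min ≤ b 0 i) (hb0min_mem : ∃ i, b 0 i = b0min)
    (T : ℕ) (hT : 1 ≤ T) :
    ∑ t ∈ Finset.Icc 1 T, ∑ i,
        (∑ j ∈ Finset.univ.filter (fun j => ψ j = i), (ghat t j) ^ 2) / b t i ≤
      4 * Δ₁ / η +
        2 * ∑ t ∈ Finset.Icc 1 T, ∑ i,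
          (∑ j ∈ Finset.univ.filter (fun j => ψ j = i), (ghat t j - gradf (x t) j) ^ 2) / b t i +
        8 * η * L * c * max 0 (Real.log (4 * η * L / b0min)) := by
  have hΔ₁nonneg : 0 ≤ Δ₁ := by rw [hΔ₁]; linarith [hlb (x 1)]
  have hb0min_pos : 0 < b0min := by
    obtain ⟨i, hi⟩ := hb0min_mem; rw [← hi]; exact hb0 i
  set M : ℝ := max 0 (Real.log (4 * η * L / b0min)) with hM
  have hM0 : 0 ≤ M := le_max_left _ _
  -- dispatch the degenerate case L < 0 (forces c = 0)
  rcases lt_or_ge L 0 with hL0 | hL0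
  · have hc0 : c = 0 := by
      by_contra hc
      obtain ⟨j, -⟩ := hψ ⟨0, Nat.pos_of_ne_zero hc⟩
      have h1 := hsmooth (EuclideanSpace.single j 1) 0
      rw [sub_zero, EuclideanSpace.norm_single] at h1
      simp only [norm_one, mul_one] at h1
      have := norm_nonneg (gradf (EuclideanSpace.single j 1) - gradf 0)
      linarith
    subst hc0
    simp only [Finset.univ_eq_empty, Finset.sum_empty, Finset.sum_const_zero, mul_zero,
      Nat.cast_zero, zero_mul, add_zero]
    have : (0:ℝ) ≤ 4 * Δ₁ / η := by positivity
    linarith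
  -- main case : 0 ≤ L
  set G : ℕ → Fin c → ℝ :=
    fun t i => ∑ j ∈ Finset.univ.filter (fun j => ψ j = i), (ghat t j) ^ 2 with hGdef
  set X : ℕ → Fin c → ℝ :=
    fun t i => ∑ j ∈ Finset.univ.filter (fun j => ψ j = i), (ghat t j - gradf (x t) j) ^ 2
    with hXdef
  have hGnn : ∀ t i, 0 ≤ G t i := fun t i => Finset.sum_nonneg fun j _ => sq_nonneg _
  have hXnn : ∀ t i, 0 ≤ X t i := fun t i => Finset.sum_nonneg fun j _ => sq_nonneg _
  have hbpos : ∀ t, ∀ i, 0 < b t i := by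
    intro t
    induction t with
    | zero => exact hb0
    | succ n ih =>
      intro i
      rw [hbrec (n+1) (by omega) i]
      simp only [Nat.add_sub_cancel]
      have h1 := ih i
      have h2 := hGnn (n+1) i
      apply Real.sqrt_pos.2
      change (0:ℝ) < b n i ^ 2 + G (n+1) i
      nlinarith
  have hbsq : ∀ t i, (b (t+1) i) ^ 2 = (b t i) ^ 2 + G (t+1) i := by
    intro t i
    rw [hbrec (t+1) (by omega) i]
    simp only [Nat.add_sub_cancel]
    exact Real.sq_sqrt (by nlinarith [hGnn (t+1) i, sq_nonneg (b t i)])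
  have hbmono : ∀ t i, b t i ≤ b (t+1) i := by
    intro t i
    have h := hbsq t i
    have h1 := hbpos t i
    have h2 := hbpos (t+1) i
    nlinarith [hGnn (t+1) i]
  -- the per-step descent inequality
  have hdesc : ∀ t, 1 ≤ t →
      η / 2 * (∑ i, G t i / b t i) ≤ (f (x t) - f (x (t+1))) + η / 2 * (∑ i, X t i / b t i)
        + ∑ i, (L * η ^ 2 / 2) * (G t i / (b t i) ^ 2) := by
    intro t ht
    set u : EuclideanSpace ℝ (Fin d) := x (t+1) - x t with hudef
    have hu : ∀ j, u j = -(η / b t (ψ j) * ghat t j) := by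
      intro j
      have h1 : u j = x (t+1) j - x t j := rfl
      rw [h1, hxrec t ht j]
      ring
    set D : Fin c → ℝ :=
      fun i => ∑ j ∈ Finset.univ.filter (fun j => ψ j = i), gradf (x t) j * ghat t j with hDdef
    have hinner : (inner ℝ (gradf (x t)) u : ℝ) = ∑ i, (-(η / b t i)) * D i := by
      have e1 : (inner ℝ (gradf (x t)) u : ℝ) = ∑ j, gradf (x t) j * u j := by
        rw [PiLp.inner_apply]
        simp [RCLike.inner_apply, conj_trivial]
        exact Finset.sum_congr rfl fun j _ => mul_comm _ _
      rw [e1]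
      rw [← Finset.sum_fiberwise Finset.univ ψ (fun j => gradf (x t) j * u j)]
      refine Finset.sum_congr rfl fun i _ => ?_
      rw [hDdef, Finset.mul_sum]
      refine Finset.sum_congr rfl fun j hj => ?_
      have hji : ψ j = i := (Finset.mem_filter.1 hj).2
      rw [hu j, hji]
      ring
    have hnormsq : ‖u‖ ^ 2 = ∑ i, (η / b t i) ^ 2 * G t i := by
      have e1 : ‖u‖ ^ 2 = ∑ j, (u j) ^ 2 := by
        rw [EuclideanSpace.norm_eq, Real.sq_sqrt (Finset.sum_nonneg fun j _ => sq_nonneg _)]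
        simp [sq_abs]
      rw [e1, ← Finset.sum_fiberwise Finset.univ ψ (fun j => (u j) ^ 2)]
      refine Finset.sum_congr rfl fun i _ => ?_
      rw [hGdef, Finset.mul_sum]
      refine Finset.sum_congr rfl fun j hj => ?_
      have hji : ψ j = i := (Finset.mem_filter.1 hj).2
      rw [hu j, hji]
      ring
    have hd := descent_aux19 f gradf hgrad L hsmooth (x t) (x (t+1))
    rw [show x (t+1) - x t = u from rfl] at hd
    rw [hinner, hnormsq] at hd
    -- hd : f (x (t+1)) ≤ f (x t) + ∑ i, -(η / b t i) * D i + L / 2 * ∑ i, (η / b t i)^2 * G t i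
    have hsum1 : ∑ i, (η / b t i) * D i ≤ (f (x t) - f (x (t+1)))
        + ∑ i, (L * η ^ 2 / 2) * (G t i / (b t i) ^ 2) := by
      have e2 : L / 2 * ∑ i, (η / b t i) ^ 2 * G t i
          = ∑ i, (L * η ^ 2 / 2) * (G t i / (b t i) ^ 2) := by
        rw [Finset.mul_sum]
        refine Finset.sum_congr rfl fun i _ => ?_
        field_simp
      rw [e2] at hd
      have e3 : ∑ i, -(η / b t i) * D i = -∑ i, (η / b t i) * D i := by
        rw [← Finset.sum_neg_distrib]
        exact Finset.sum_congr rfl fun i _ => by ring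
      rw [e3] at hd
      linarith
    have hper : ∀ i : Fin c, η / 2 * (G t i / b t i)
        ≤ (η / b t i) * D i + η / 2 * (X t i / b t i) := by
      intro i
      have hb := hbpos t i
      have hP : (0:ℝ) ≤ ∑ j ∈ Finset.univ.filter (fun j => ψ j = i), (gradf (x t) j) ^ 2 :=
        Finset.sum_nonneg fun j _ => sq_nonneg _
      have hXe : X t i = G t i - 2 * D i
          + ∑ j ∈ Finset.univ.filter (fun j => ψ j = i), (gradf (x t) j) ^ 2 := by
        rw [hXdef, hGdef, hDdef]
        simp only
        rw [Finset.mul_sum, ← Finset.sum_sub_distrib, ← Finset.sum_add_distrib]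
        exact Finset.sum_congr rfl fun j _ => by ring
      have hGXD : G t i - X t i ≤ 2 * D i := by linarith
      have hr : 0 ≤ η / b t i := by positivity
      have h6 : η / b t i * (G t i - X t i - 2 * D i) ≤ 0 :=
        mul_nonpos_of_nonneg_of_nonpos hr (by linarith)
      have e4 : η / 2 * (G t i / b t i) - ((η / b t i) * D i + η / 2 * (X t i / b t i))
          = (η / b t i) * (G t i - X t i - 2 * D i) / 2 := by
        ring
      linarith
    have hsum2 : η / 2 * (∑ i, G t i / b t i)
        ≤ ∑ i, ((η / b t i) * D i + η / 2 * (X t i / b t i)) := by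
      rw [Finset.mul_sum]
      exact Finset.sum_le_sum fun i _ => hper i
    rw [Finset.sum_add_distrib] at hsum2
    have e5 : ∑ i, η / 2 * (X t i / b t i) = η / 2 * ∑ i, X t i / b t i :=
      (Finset.mul_sum _ _ _).symm
    rw [e5] at hsum2
    linarith
  -- split bound for the second-order term
  set δ : ℕ → Fin c → ℝ := fun t i =>
    if b t i < 2 * η * L then 2 * (Real.log (b t i) - Real.log (b (t-1) i)) else 0 with hδdef
  have hsplit : ∀ t, 1 ≤ t → ∀ i,
      (L * η ^ 2 / 2) * (G t i / (b t i) ^ 2)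
        ≤ η / 4 * (G t i / b t i) + (L * η ^ 2 / 2) * δ t i := by
    intro t ht i
    obtain ⟨s, rfl⟩ : ∃ s, t = s + 1 := ⟨t - 1, by omega⟩
    have hb1 := hbpos s i
    have hb2 := hbpos (s+1) i
    have hGn := hGnn (s+1) i
    by_cases hcase : b (s+1) i < 2 * η * L
    · have hLpos : 0 < L := by nlinarith
      have hδv : δ (s+1) i = 2 * (Real.log (b (s+1) i) - Real.log (b s i)) := by
        rw [hδdef]; simp only [Nat.add_sub_cancel]; rw [if_pos hcase]
      have hQ : G (s+1) i = b (s+1) i ^ 2 - b s i ^ 2 := by linarith [hbsq s i]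
      have h2 : G (s+1) i / b (s+1) i ^ 2 ≤ 2 * (Real.log (b (s+1) i) - Real.log (b s i)) := by
        have hlog := Real.log_le_sub_one_of_pos
          (show (0:ℝ) < b s i ^ 2 / b (s+1) i ^ 2 by positivity)
        rw [Real.log_div (by positivity) (by positivity), Real.log_pow, Real.log_pow] at hlog
        have e : G (s+1) i / b (s+1) i ^ 2 = 1 - b s i ^ 2 / b (s+1) i ^ 2 := by
          rw [hQ]; field_simp
        rw [e]
        push_cast at hlog
        linarith
      have h3 : (0:ℝ) ≤ η / 4 * (G (s+1) i / b (s+1) i) := by positivity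
      have h4 : (L * η ^ 2 / 2) * (G (s+1) i / b (s+1) i ^ 2)
          ≤ (L * η ^ 2 / 2) * (2 * (Real.log (b (s+1) i) - Real.log (b s i))) := by
        apply mul_le_mul_of_nonneg_left h2 (by positivity)
      rw [hδv]
      linarith
    · have hδv : δ (s+1) i = 0 := by
        rw [hδdef]; simp only [Nat.add_sub_cancel]; rw [if_neg hcase]
      push_neg at hcase
      have hbne : b (s+1) i ≠ 0 := hb2.ne'
      have e : η / 4 * (G (s+1) i / b (s+1) i) - (L * η ^ 2 / 2) * (G (s+1) i / b (s+1) i ^ 2)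
          = η * (G (s+1) i * (b (s+1) i - 2 * η * L)) / (4 * b (s+1) i ^ 2) := by
        field_simp
        ring
      have h5 : (0:ℝ) ≤ η * (G (s+1) i * (b (s+1) i - 2 * η * L)) / (4 * b (s+1) i ^ 2) := by
        apply div_nonneg _ (by positivity)
        apply mul_nonneg hη.le
        apply mul_nonneg hGn
        linarith
      rw [hδv]
      linarith
  -- per-coordinate-block log-telescoping bound
  have hδsum : ∀ i, ∑ t ∈ Finset.Icc 1 T, δ t i ≤ 2 * M := by
    intro i
    by_cases hL2 : 2 * η * L ≤ 0
    · have hz : ∀ t ∈ Finset.Icc 1 T, δ t i = 0 := by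
        intro t _
        rw [hδdef]
        exact if_neg (not_lt.2 (le_trans hL2 (hbpos t i).le))
      rw [Finset.sum_eq_zero hz]
      positivity
    · push_neg at hL2
      have key : ∀ N : ℕ, ∑ t ∈ Finset.Icc 1 N, δ t i
          ≤ max 0 (2 * (Real.log (min (b N i) (2 * η * L)) - Real.log (b 0 i))) := by
        intro N
        induction N with
        | zero => simp
        | succ n ih =>
          rw [Finset.sum_Icc_succ_top (by omega)]
          by_cases hc2 : b (n+1) i < 2 * η * L
          · have hδv : δ (n+1) i = 2 * (Real.log (b (n+1) i) - Real.log (b n i)) := by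
              rw [hδdef]; simp only [Nat.add_sub_cancel]; rw [if_pos hc2]
            have hmin1 : min (b (n+1) i) (2 * η * L) = b (n+1) i := min_eq_left hc2.le
            have hminn : min (b n i) (2 * η * L) = b n i :=
              min_eq_left (le_of_lt (lt_of_le_of_lt (hbmono n i) hc2))
            rw [hδv, hmin1]
            rw [hminn] at ih
            have hlog1 : Real.log (b n i) ≤ Real.log (b (n+1) i) :=
              Real.log_le_log (hbpos n i) (hbmono n i)
            have hlog0 : Real.log (b 0 i) ≤ Real.log (b n i) := by
              have hmono : b 0 i ≤ b n i := by
                have : Monotone (fun t => b t i) := monotone_nat_of_le_succ (fun m => hbmono m i)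
                exact this (Nat.zero_le n)
              exact Real.log_le_log (hb0 i) hmono
            have A : max 0 (2 * (Real.log (b n i) - Real.log (b 0 i)))
                = 2 * (Real.log (b n i) - Real.log (b 0 i)) := max_eq_right (by linarith)
            have B : max 0 (2 * (Real.log (b (n+1) i) - Real.log (b 0 i)))
                = 2 * (Real.log (b (n+1) i) - Real.log (b 0 i)) := max_eq_right (by linarith)
            rw [B]
            rw [A] at ih
            linarith
          · have hδv : δ (n+1) i = 0 := by
              rw [hδdef]; simp only [Nat.add_sub_cancel]; rw [if_neg hc2]
            have hmin1 : min (b (n+1) i) (2 * η * L) = 2 * η * L :=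
              min_eq_right (not_lt.1 hc2)
            rw [hδv, hmin1, add_zero]
            refine le_trans ih ?_
            have hlogmin : Real.log (min (b n i) (2 * η * L)) ≤ Real.log (2 * η * L) :=
              Real.log_le_log (lt_min (hbpos n i) hL2) (min_le_right _ _)
            exact max_le_max (le_refl 0) (by linarith)
      refine le_trans (key T) ?_
      have h1 : Real.log (min (b T i) (2 * η * L)) ≤ Real.log (2 * η * L) :=
        Real.log_le_log (lt_min (hbpos T i) hL2) (min_le_right _ _)
      have h2 : Real.log b0min ≤ Real.log (b 0 i) :=
        Real.log_le_log hb0min_pos (hb0min_le i)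
      have h3 : Real.log (2 * η * L) - Real.log b0min = Real.log (2 * η * L / b0min) :=
        (Real.log_div (ne_of_gt hL2) (ne_of_gt hb0min_pos)).symm
      have h4 : Real.log (2 * η * L / b0min) ≤ Real.log (4 * η * L / b0min) := by
        apply Real.log_le_log (by positivity)
        gcongr
        linarith
      have h5 : Real.log (4 * η * L / b0min) ≤ M := le_max_right _ _
      apply max_le (by linarith)
      linarith
  -- telescoping of function values
  have htel : ∀ N : ℕ, ∑ t ∈ Finset.Icc 1 N, (f (x t) - f (x (t+1))) = f (x 1) - f (x (N+1)) := by
    intro N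
    induction N with
    | zero => simp
    | succ n ih =>
      rw [Finset.sum_Icc_succ_top (by omega), ih]
      ring
  -- assemble everything
  set S : ℝ := ∑ t ∈ Finset.Icc 1 T, ∑ i, G t i / b t i with hSdef
  set Ξ : ℝ := ∑ t ∈ Finset.Icc 1 T, ∑ i, X t i / b t i with hΞdef
  have hsumall : η / 2 * S ≤ (f (x 1) - f (x (T+1))) + η / 2 * Ξ
      + (η / 4 * S + (L * η ^ 2 / 2) * ∑ t ∈ Finset.Icc 1 T, ∑ i, δ t i) := by
    have step1 : ∀ t ∈ Finset.Icc 1 T, η / 2 * (∑ i, G t i / b t i)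
        ≤ (f (x t) - f (x (t+1))) + η / 2 * (∑ i, X t i / b t i)
          + ∑ i, (η / 4 * (G t i / b t i) + (L * η ^ 2 / 2) * δ t i) := by
      intro t ht'
      have ht1 : 1 ≤ t := (Finset.mem_Icc.1 ht').1
      have h1 := hdesc t ht1
      have h2 : ∑ i, (L * η ^ 2 / 2) * (G t i / (b t i) ^ 2)
          ≤ ∑ i, (η / 4 * (G t i / b t i) + (L * η ^ 2 / 2) * δ t i) :=
        Finset.sum_le_sum fun i _ => hsplit t ht1 i
      linarith
    calc η / 2 * S = ∑ t ∈ Finset.Icc 1 T, η / 2 * ∑ i, G t i / b t i := by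
          rw [hSdef, Finset.mul_sum]
    _ ≤ ∑ t ∈ Finset.Icc 1 T, ((f (x t) - f (x (t+1))) + η / 2 * (∑ i, X t i / b t i)
          + ∑ i, (η / 4 * (G t i / b t i) + (L * η ^ 2 / 2) * δ t i)) :=
        Finset.sum_le_sum step1
    _ = (f (x 1) - f (x (T+1))) + η / 2 * Ξ
          + (η / 4 * S + (L * η ^ 2 / 2) * ∑ t ∈ Finset.Icc 1 T, ∑ i, δ t i) := by
        rw [Finset.sum_add_distrib, Finset.sum_add_distrib, htel T]
        congr 1
        · congr 1
          rw [hΞdef, Finset.mul_sum]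
        · have e1 : ∀ t : ℕ, (∑ i, (η / 4 * (G t i / b t i) + (L * η ^ 2 / 2) * δ t i))
              = η / 4 * (∑ i, G t i / b t i) + (L * η ^ 2 / 2) * ∑ i, δ t i := by
            intro t
            rw [Finset.sum_add_distrib, Finset.mul_sum, Finset.mul_sum]
          calc ∑ t ∈ Finset.Icc 1 T, ∑ i, (η / 4 * (G t i / b t i) + (L * η ^ 2 / 2) * δ t i)
              = ∑ t ∈ Finset.Icc 1 T,
                (η / 4 * (∑ i, G t i / b t i) + (L * η ^ 2 / 2) * ∑ i, δ t i) :=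
              Finset.sum_congr rfl fun t _ => e1 t
          _ = η / 4 * S + (L * η ^ 2 / 2) * ∑ t ∈ Finset.Icc 1 T, ∑ i, δ t i := by
              rw [Finset.sum_add_distrib, hSdef, Finset.mul_sum, Finset.mul_sum]
  have hDsum : ∑ t ∈ Finset.Icc 1 T, ∑ i, δ t i ≤ (c : ℝ) * (2 * M) := by
    rw [Finset.sum_comm]
    calc ∑ i : Fin c, ∑ t ∈ Finset.Icc 1 T, δ t i ≤ ∑ _i : Fin c, 2 * M :=
        Finset.sum_le_sum fun i _ => hδsum i
    _ = (c : ℝ) * (2 * M) := by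
        rw [Finset.sum_const, Finset.card_univ, Fintype.card_fin, nsmul_eq_mul]
  have hfx : f (x 1) - f (x (T+1)) ≤ Δ₁ := by
    rw [hΔ₁]; linarith [hlb (x (T+1))]
  have hmul : (L * η ^ 2 / 2) * (∑ t ∈ Finset.Icc 1 T, ∑ i, δ t i)
      ≤ (L * η ^ 2 / 2) * ((c : ℝ) * (2 * M)) :=
    mul_le_mul_of_nonneg_left hDsum (by positivity)
  have hq : η / 4 * S ≤ Δ₁ + η / 2 * Ξ + L * η ^ 2 * (c : ℝ) * M := by nlinarith
  have hgoal : S ≤ 4 * Δ₁ / η + 2 * Ξ + 8 * η * L * (c : ℝ) * M := by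
    have e : 4 * Δ₁ / η + 2 * Ξ + 8 * η * L * (c : ℝ) * M
        = (4 * Δ₁ + 2 * η * Ξ + 8 * η ^ 2 * L * (c : ℝ) * M) / η := by
      field_simp
    rw [e, le_div_iff₀ hη]
    have hpos : (0:ℝ) ≤ η ^ 2 * L * (c : ℝ) * M := by positivity
    nlinarith
  exact hgoal
end
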